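/- Rigidity of traces along faithful paths: let L be a finitely generated group and let (ρ_t)_{t∈[0,1]} be a path in Hom(L, PSL₂(ℝ)), i.e. for every g ∈ L the map t ↦ ρ_t(g) is continuous on [0,1], and suppose each ρ_t is injective. Then for every g ∈ L and all s, t ∈ [0,1]: if tr²(ρ_s(g)) < 4, then tr²(ρ_t(g)) = tr²(ρ_s(g)). (Equivalently, each elliptic element stays elliptic with constant trace-squared along the path; this is the trace form of the statement that a path of faithful projective representations consists of a single semi-conjugacy class.) -/

import Mathlib

noncomputable instance : TopologicalSpace (Matrix.SpecialLinearGroup (Fin 2) ℝ) :=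
  inferInstanceAs (TopologicalSpace {A : Matrix (Fin 2) (Fin 2) ℝ // A.det = 1})


open Real Matrix

abbrev SL2 := Matrix.SpecialLinearGroup (Fin 2) ℝ


def cheb (t : ℝ) : ℕ → ℝ
  | 0 => 0
  | 1 => 1
  | (n+2) => t * cheb t (n+1) - cheb t n

lemma cheb_sin (θ : ℝ) : ∀ n : ℕ, cheb (2 * Real.cos θ) n * Real.sin θ = Real.sin (n * θ)
  | 0 => by simp [cheb]
  | 1 => by simp [cheb]
  | (n+2) => by
      have h1 := cheb_sin θ (n+1)
      have h0 := cheb_sin θ n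
      have key : Real.sin (((n:ℝ)+2) * θ)
          = 2 * Real.cos θ * Real.sin (((n:ℝ)+1)*θ) - Real.sin ((n:ℝ)*θ) := by
        have e1 : ((n:ℝ)+2) * θ = (((n:ℝ)+1) * θ) + θ := by ring
        have e0 : (n:ℝ) * θ = (((n:ℝ)+1) * θ) - θ := by ring
        rw [e1, e0, Real.sin_add, Real.sin_sub]; ring
      rw [cheb]
      push_cast at h1 h0 ⊢
      rw [key]
      linear_combination (2*Real.cos θ) * h1 - h0

lemma cheb_monotone {t : ℝ} (ht : 2 ≤ t) :
    ∀ n : ℕ, 0 ≤ cheb t n ∧ cheb t n ≤ cheb t (n+1) ∧ 1 ≤ cheb t (n+1)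
  | 0 => by norm_num [cheb]
  | (n+1) => by
      obtain ⟨h0, h1, h2⟩ := cheb_monotone ht n
      have : cheb t (n+2) = t * cheb t (n+1) - cheb t n := rfl
      refine ⟨by linarith, ?_, ?_⟩ <;> nlinarith

lemma cheb_neg (t : ℝ) : ∀ n : ℕ, cheb (-t) n = (-1)^(n+1) * cheb t n
  | 0 => by simp [cheb]
  | 1 => by simp [cheb]
  | (n+2) => by
      have h1 := cheb_neg t (n+1)
      have h0 := cheb_neg t n
      show -t * cheb (-t) (n+1) - cheb (-t) n = (-1)^(n+2+1) * (t * cheb t (n+1) - cheb t n)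
      rw [h1, h0]; ring

lemma cheb_ne_zero {t : ℝ} (ht : 2 ≤ |t|) (n : ℕ) : cheb t (n+1) ≠ 0 := by
  rcases le_or_gt 2 t with h | h
  · have := (cheb_monotone h n).2.2
    linarith
  · have ht' : 2 ≤ -t := by
      rcases abs_cases t with ⟨h1, _⟩ | ⟨h1, _⟩ <;> linarith
    have h1 : (1:ℝ) ≤ cheb (-t) (n+1) := (cheb_monotone ht' n).2.2
    have hne := cheb_neg t (n+1)
    intro hz
    rw [hz] at hne
    simp at hne
    linarith


lemma sl2_mul_self {M : Matrix (Fin 2) (Fin 2) ℝ} (h : M.det = 1) :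
    M * M = M.trace • M - 1 := by
  rw [Matrix.det_fin_two] at h
  ext i j
  fin_cases i <;> fin_cases j <;>
    simp [Matrix.mul_apply, Fin.sum_univ_two, Matrix.trace_fin_two, Matrix.one_apply] <;>
    linarith []

lemma scalar_sq_eq_one {a : ℝ} (h : Matrix.det (a • (1 : Matrix (Fin 2) (Fin 2) ℝ)) = 1) :
    a ^ 2 = 1 := by
  rw [Matrix.det_smul, Matrix.det_one] at h
  simpa using h

lemma trace_smul_one (a : ℝ) :
    Matrix.trace (a • (1 : Matrix (Fin 2) (Fin 2) ℝ)) = 2 * a := by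
  simp [Matrix.trace_smul]
  ring

lemma sl2_pow {M : Matrix (Fin 2) (Fin 2) ℝ} (h : M.det = 1) :
    ∀ n : ℕ, M ^ (n+1) = cheb M.trace (n+1) • M - cheb M.trace n • 1
  | 0 => by simp [cheb]
  | (n+1) => by
      have ih := sl2_pow h n
      rw [pow_succ, ih, sub_mul, smul_mul_assoc, smul_mul_assoc, one_mul, sl2_mul_self h,
        show cheb M.trace (n+2) = M.trace * cheb M.trace (n+1) - cheb M.trace n from rfl]
      module

lemma scalar_eq_smul_one (r : ℝ) :
    Matrix.scalar (Fin 2) r = r • (1 : Matrix (Fin 2) (Fin 2) ℝ) := by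
  rw [Matrix.scalar_apply, Matrix.smul_one_eq_diagonal]

/-- If some positive power of `X ∈ SL(2,ℝ)` is central (i.e. `±1`), then the square of the
trace of `X` is `(2 cos (π k / m))²` for some `0 ≤ k ≤ m`. -/
lemma trace_sq_of_pow_central (X : SL2) (m : ℕ) (hm : 1 ≤ m)
    (h : X ^ m ∈ Subgroup.center SL2) :
    ∃ k : ℕ, k ≤ m ∧ ((X : Matrix (Fin 2) (Fin 2) ℝ).trace) ^ 2
      = (2 * Real.cos (π * k / m)) ^ 2 := by
  obtain ⟨r, hr, hs⟩ := Matrix.SpecialLinearGroup.mem_center_iff.mp h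
  rw [Fintype.card_fin] at hr
  obtain ⟨n, rfl⟩ : ∃ n, m = n + 1 := ⟨m - 1, (Nat.succ_pred_eq_of_pos hm).symm⟩
  set t := (X : Matrix (Fin 2) (Fin 2) ℝ).trace with ht
  have hpow : (X : Matrix (Fin 2) (Fin 2) ℝ) ^ (n+1)
      = cheb t (n+1) • (X : Matrix (Fin 2) (Fin 2) ℝ) - cheb t n • 1 :=
    sl2_pow X.property n
  have hs' : cheb t (n+1) • (X : Matrix (Fin 2) (Fin 2) ℝ) - cheb t n • 1
      = r • (1 : Matrix (Fin 2) (Fin 2) ℝ) := by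
    rw [← hpow, ← Matrix.SpecialLinearGroup.coe_pow, ← scalar_eq_smul_one, hs]
  by_cases hc : cheb t (n+1) = 0
  · -- elliptic case: |t| < 2
    have habs : |t| < 2 := by
      by_contra hab
      exact cheb_ne_zero (le_of_not_gt hab) n hc
    have h1 : -1 ≤ t / 2 := by cases abs_lt.mp habs; linarith
    have h2 : t / 2 ≤ 1 := by cases abs_lt.mp habs; linarith
    set θ := Real.arccos (t / 2) with hθ
    have hcos : Real.cos θ = t / 2 := Real.cos_arccos h1 h2
    have ht2 : t = 2 * Real.cos θ := by rw [hcos]; ring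
    have hsinpos : 0 < Real.sin θ :=
      Real.sin_pos_of_pos_of_lt_pi (Real.arccos_pos.mpr (by cases abs_lt.mp habs; linarith))
        (lt_of_le_of_ne (Real.arccos_le_pi _)
          (by
            intro hpi
            rw [hpi, Real.cos_pi] at hcos
            cases abs_lt.mp habs; linarith))
    have hsin0 : Real.sin ((n+1 : ℕ) * θ) = 0 := by
      rw [← cheb_sin θ (n+1), ← ht2, hc, zero_mul]
    obtain ⟨k, hk⟩ := Real.sin_eq_zero_iff.mp hsin0
    have hθpos : 0 < θ := Real.arccos_pos.mpr (by cases abs_lt.mp habs; linarith)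
    have hθpi : θ ≤ π := Real.arccos_le_pi _
    have hkpos : 0 < (k : ℝ) * π := by
      rw [hk]; positivity
    have hk0 : 0 < k := by
      by_contra hk0
      push_neg at hk0
      have : (k : ℝ) ≤ 0 := by exact_mod_cast hk0
      nlinarith [Real.pi_pos]
    have hkle : (k : ℝ) ≤ (n + 1 : ℕ) := by
      have : (k : ℝ) * π ≤ ((n+1 : ℕ) : ℝ) * π := by
        rw [hk]
        have : ((n+1 : ℕ) : ℝ) ≥ 0 := by positivity
        nlinarith [Real.pi_pos]
      nlinarith [Real.pi_pos]
    have hcast : ((k.toNat : ℕ) : ℝ) = (k : ℝ) := by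
      exact_mod_cast congrArg (Int.cast : ℤ → ℝ) (Int.toNat_of_nonneg hk0.le)
    refine ⟨k.toNat, ?_, ?_⟩
    · have : (k.toNat : ℝ) ≤ ((n+1:ℕ) : ℝ) := by rw [hcast]; exact hkle
      exact_mod_cast this
    · have hθeq : θ = π * (k.toNat : ℝ) / ((n+1:ℕ) : ℝ) := by
        have hne : ((n+1:ℕ) : ℝ) ≠ 0 := by positivity
        rw [hcast]
        field_simp
        rw [mul_comm (π) _, hk]
        push_cast
        ring
      rw [ht2, hθeq]
  · -- scalar case
    have hX : (X : Matrix (Fin 2) (Fin 2) ℝ)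
        = ((cheb t n + r) / cheb t (n+1)) • 1 := by
      have : cheb t (n+1) • (X : Matrix (Fin 2) (Fin 2) ℝ) = (cheb t n + r) • 1 := by
        rw [add_smul, ← hs']
        module
      calc (X : Matrix (Fin 2) (Fin 2) ℝ)
          = (cheb t (n+1))⁻¹ • (cheb t (n+1) • (X : Matrix (Fin 2) (Fin 2) ℝ)) := by
            rw [smul_smul, inv_mul_cancel₀ hc, one_smul]
        _ = ((cheb t n + r) / cheb t (n+1)) • 1 := by
            rw [this, smul_smul, div_eq_inv_mul]
    set a := (cheb t n + r) / cheb t (n+1)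
    have ha2 : a ^ 2 = 1 := scalar_sq_eq_one (by rw [← hX]; exact X.property)
    have hta : t = 2 * a := by rw [ht, hX, trace_smul_one]
    refine ⟨0, Nat.zero_le _, ?_⟩
    simp only [Nat.cast_zero, mul_zero, zero_div, Real.cos_zero, mul_one]
    rw [hta]
    nlinarith [ha2]

/-- An elliptic element whose trace corresponds to a rational rotation angle is torsion
modulo the center. -/
lemma pow_central_of_elliptic_rational (X : SL2) (q : ℚ)
    (heq : ((X : Matrix (Fin 2) (Fin 2) ℝ).trace) ^ 2 = (2 * Real.cos (π * q)) ^ 2)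
    (hlt : ((X : Matrix (Fin 2) (Fin 2) ℝ).trace) ^ 2 < 4) :
    ∃ m : ℕ, 1 ≤ m ∧ X ^ m ∈ Subgroup.center SL2 := by
  set t := (X : Matrix (Fin 2) (Fin 2) ℝ).trace with ht
  have habs : |t| < 2 := by
    rw [abs_lt]; constructor <;> nlinarith
  obtain ⟨hl, hr'⟩ := abs_lt.mp habs
  set θ := Real.arccos (t / 2) with hθ
  have hcos : Real.cos θ = t / 2 := Real.cos_arccos (by linarith) (by linarith)
  have ht2 : t = 2 * Real.cos θ := by rw [hcos]; ring
  have hsinpos : 0 < Real.sin θ :=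
    Real.sin_pos_of_pos_of_lt_pi (Real.arccos_pos.mpr (by linarith))
      (lt_of_le_of_ne (Real.arccos_le_pi _)
        (by intro hpi; rw [hpi, Real.cos_pi] at hcos; linarith))
  have hsq : (Real.cos θ) ^ 2 = (Real.cos (π * q)) ^ 2 := by
    rw [hcos]; nlinarith
  have hcases : Real.cos θ = Real.cos (π * q) ∨ Real.cos θ = -Real.cos (π * q) := by
    have hmul : (Real.cos θ - Real.cos (π * q)) * (Real.cos θ + Real.cos (π * q)) = 0 := by
      linear_combination hsq
    rcases mul_eq_zero.mp hmul with h | h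
    · left; linarith
    · right; linarith
  obtain ⟨q', hq'⟩ : ∃ q' : ℚ, Real.cos θ = Real.cos (π * q') := by
    rcases hcases with h | h
    · exact ⟨q, h⟩
    · refine ⟨1 - q, ?_⟩
      have e : π * ((1 - q : ℚ) : ℝ) = π - π * q := by push_cast; ring
      rw [e, Real.cos_pi_sub, h]
  set d : ℕ := q'.den with hd
  have hd1 : 1 ≤ d := Nat.one_le_iff_ne_zero.mpr q'.den_nz
  have hTθ := Polynomial.Chebyshev.T_real_cos θ (d : ℤ)
  have hTq := Polynomial.Chebyshev.T_real_cos (π * (q' : ℝ)) (d : ℤ)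
  rw [hq'] at hTθ
  have hcosd : Real.cos (((d:ℤ) : ℝ) * θ) = Real.cos (((d:ℤ) : ℝ) * (π * (q' : ℝ))) :=
    hTθ.symm.trans hTq
  have hnum : ((d:ℤ) : ℝ) * (π * (q' : ℝ)) = (q'.num : ℝ) * π := by
    have hden : ((q'.den : ℝ)) ≠ 0 := by
      exact_mod_cast q'.den_nz
    have hq'' : ((q' : ℝ)) = (q'.num : ℝ) / (q'.den : ℝ) := by
      rw [Rat.cast_def]
    rw [hq'']
    field_simp [hd]
    rw [hd]; push_cast; ring
  have hcossq1 : Real.cos ((q'.num : ℝ) * π) ^ 2 = 1 := by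
    have h2 : Real.cos (2 * ((q'.num : ℝ) * π)) = 1 := by
      have e : 2 * ((q'.num : ℝ) * π) = (q'.num : ℝ) * (2 * π) := by ring
      rw [e]
      exact Real.cos_int_mul_two_pi q'.num
    have := Real.cos_two_mul ((q'.num : ℝ) * π)
    nlinarith
  have hsind : Real.sin ((d : ℝ) * θ) = 0 := by
    have h1 : Real.cos ((d : ℝ) * θ) ^ 2 = 1 := by
      have e : ((d:ℤ) : ℝ) = (d : ℝ) := by push_cast; ring
      rw [← e, hcosd, hnum] at *
      exact hcossq1
    have := Real.sin_sq_add_cos_sq ((d : ℝ) * θ)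
    nlinarith [this, h1, sq_nonneg (Real.sin ((d : ℝ) * θ))]
  have hcheb : cheb t d = 0 := by
    have := cheb_sin θ d
    rw [← ht2] at this
    rw [hsind] at this
    exact by
      rcases mul_eq_zero.mp this with h | h
      · exact h
      · exact absurd h (ne_of_gt hsinpos)
  obtain ⟨e, hde⟩ : ∃ e, d = e + 1 := ⟨d - 1, (Nat.succ_pred_eq_of_pos hd1).symm⟩
  rw [hde] at hcheb
  refine ⟨e + 1, Nat.le_add_left 1 e, ?_⟩
  have hpow : ((X ^ (e+1) : SL2) : Matrix (Fin 2) (Fin 2) ℝ)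
      = (- cheb t e) • (1 : Matrix (Fin 2) (Fin 2) ℝ) := by
    rw [Matrix.SpecialLinearGroup.coe_pow, sl2_pow X.property e, ← ht, hcheb]
    module
  apply Matrix.SpecialLinearGroup.mem_center_iff.mpr
  refine ⟨- cheb t e, ?_, ?_⟩
  · rw [Fintype.card_fin]
    exact scalar_sq_eq_one (by rw [← hpow]; exact (X ^ (e+1)).property)
  · rw [scalar_eq_smul_one, hpow]

abbrev PSL2 := SL2 ⧸ Subgroup.center SL2

lemma trace_sq_eq_of_rel {a b : SL2}
    (h : (QuotientGroup.leftRel (Subgroup.center SL2)) a b) :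
    ((a : Matrix (Fin 2) (Fin 2) ℝ).trace) ^ 2 = ((b : Matrix (Fin 2) (Fin 2) ℝ).trace) ^ 2 := by
  rw [QuotientGroup.leftRel_apply] at h
  obtain ⟨r, hr, hs⟩ := Matrix.SpecialLinearGroup.mem_center_iff.mp h
  rw [Fintype.card_fin] at hr
  have hb : b = a * (a⁻¹ * b) := by group
  have hbv : (b : Matrix (Fin 2) (Fin 2) ℝ)
      = (a : Matrix (Fin 2) (Fin 2) ℝ) * (r • (1 : Matrix (Fin 2) (Fin 2) ℝ)) := by
    rw [← scalar_eq_smul_one, hs]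
    conv_lhs => rw [hb]
    rw [Matrix.SpecialLinearGroup.coe_mul]
  have : (b : Matrix (Fin 2) (Fin 2) ℝ).trace = r * (a : Matrix (Fin 2) (Fin 2) ℝ).trace := by
    rw [hbv, Matrix.mul_smul, mul_one, Matrix.trace_smul]
    simp
  rw [this]
  nlinarith [hr]

noncomputable def trsq : PSL2 → ℝ :=
  fun z => Quotient.liftOn' z (fun X : SL2 => ((X : Matrix (Fin 2) (Fin 2) ℝ).trace) ^ 2)
    (fun _ _ h => trace_sq_eq_of_rel h)

lemma trsq_mk (X : SL2) : trsq (X : PSL2) = ((X : Matrix (Fin 2) (Fin 2) ℝ).trace) ^ 2 := rfl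

lemma trsq_continuous : Continuous trsq :=
  Continuous.quotient_liftOn' ((continuous_subtype_val.matrix_trace).pow 2) _

/-- Picking a rational rotation number whose trace-squared lies in a given interval. -/
lemma exists_rat_trace_btwn {x y : ℝ} (h0 : 0 ≤ x) (hxy : x < y) (hx4 : x < 4) :
    ∃ q : ℚ, x < (2 * Real.cos (π * q)) ^ 2 ∧ (2 * Real.cos (π * q)) ^ 2 < y ∧
      (2 * Real.cos (π * q)) ^ 2 < 4 := by
  set h : ℝ → ℝ := fun a => (2 * Real.cos (π * a)) ^ 2 with hh
  have hcont : Continuous h := by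
    apply Continuous.pow
    exact continuous_const.mul (Real.continuous_cos.comp (continuous_const.mul continuous_id))
  set w : ℝ := (x + min y 4) / 2 with hw
  have hxw : x < w := by
    have : x < min y 4 := lt_min hxy hx4
    simp only [hw]; linarith
  have hwy : w < min y 4 := by
    have : x < min y 4 := lt_min hxy hx4
    simp only [hw]; linarith
  have hw0 : 0 ≤ w := by linarith
  have hw4 : w ≤ 4 := by
    have := min_le_right y 4
    linarith
  -- w is attained by h on [0, 1/2]
  have hmem : w ∈ Set.Icc (h (1/2)) (h 0) := by
    constructor
    · have : h (1/2) = 0 := by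
        simp only [hh]
        rw [show π * (1/2 : ℝ) = π / 2 by ring, Real.cos_pi_div_two]
        norm_num
      rw [this]; exact hw0
    · have : h 0 = 4 := by
        simp only [hh]
        norm_num
      rw [this]; exact hw4
  obtain ⟨a₀, _, ha₀⟩ := intermediate_value_Icc' (by norm_num : (0:ℝ) ≤ 1/2)
    hcont.continuousOn hmem
  have hopen : IsOpen (h ⁻¹' Set.Ioo x (min y 4)) := (isOpen_Ioo).preimage hcont
  have hne : (h ⁻¹' Set.Ioo x (min y 4)).Nonempty := ⟨a₀, by rw [Set.mem_preimage, ha₀]; exact ⟨hxw, hwy⟩⟩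
  obtain ⟨q, hq⟩ := Rat.denseRange_cast.exists_mem_open hopen hne
  rw [Set.mem_preimage] at hq
  exact ⟨q, hq.1, lt_of_lt_of_le hq.2 (min_le_left _ _), lt_of_lt_of_le hq.2 (min_le_right _ _)⟩

/-- **Rigidity of traces along faithful paths.**  Let `L` be a finitely generated group
and `(ρ_t)_{t ∈ [0,1]}` a path of injective homomorphisms into
`PSL₂(ℝ) = SL(2,ℝ)/{±I}` (each `t ↦ ρ_t(g)` continuous).  Then for every `g ∈ L` and all
`s, t ∈ [0,1]`, if `tr²(ρ_s(g)) < 4` then `tr²(ρ_t(g)) = tr²(ρ_s(g))` — where `tr²` is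
expressed via arbitrary lifts to `SL(2,ℝ)`, on which it is well defined. -/
theorem faithful_path_trace_rigidity {L : Type*} [Group L] (hfg : Group.FG L)
    (ρ : Set.Icc (0 : ℝ) 1 → L →*
      (Matrix.SpecialLinearGroup (Fin 2) ℝ ⧸
        Subgroup.center (Matrix.SpecialLinearGroup (Fin 2) ℝ)))
    (hcont : ∀ g : L, Continuous fun t : Set.Icc (0 : ℝ) 1 => ρ t g)
    (hinj : ∀ t : Set.Icc (0 : ℝ) 1, Function.Injective (ρ t)) :
    ∀ (g : L) (s t : Set.Icc (0 : ℝ) 1)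
      (A B : Matrix.SpecialLinearGroup (Fin 2) ℝ),
      (↑A = ρ s g) → (↑B = ρ t g) →
      ((A : Matrix (Fin 2) (Fin 2) ℝ).trace) ^ 2 < 4 →
      ((B : Matrix (Fin 2) (Fin 2) ℝ).trace) ^ 2 =
        ((A : Matrix (Fin 2) (Fin 2) ℝ).trace) ^ 2 := by
  intro g s t A B hA hB hlt
  haveI : ConnectedSpace (Set.Icc (0:ℝ) 1) :=
    Subtype.connectedSpace (isConnected_Icc zero_le_one)
  set f : Set.Icc (0:ℝ) 1 → ℝ := fun u => trsq (ρ u g) with hf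
  have hfc : Continuous f := trsq_continuous.comp (hcont g)
  have hfs : f s = ((A : Matrix (Fin 2) (Fin 2) ℝ).trace) ^ 2 := by
    rw [hf]; simp only; rw [← hA, trsq_mk]
  have hft : f t = ((B : Matrix (Fin 2) (Fin 2) ℝ).trace) ^ 2 := by
    rw [hf]; simp only; rw [← hB, trsq_mk]
  by_contra hne
  have hfst : f s ≠ f t := by
    rw [hfs, hft]
    intro hcon
    exact hne hcon.symm
  have hlohi : min (f s) (f t) < max (f s) (f t) := min_lt_max.mpr hfst
  have h0 : 0 ≤ min (f s) (f t) :=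
    le_min (by rw [hfs]; positivity) (by rw [hft]; positivity)
  have h4 : min (f s) (f t) < 4 := lt_of_le_of_lt (min_le_left _ _) (by rw [hfs]; exact hlt)
  obtain ⟨q, hq1, hq2, hq4⟩ := exists_rat_trace_btwn h0 hlohi h4
  have hIcc : Set.Icc (min (f s) (f t)) (max (f s) (f t)) ⊆ Set.range f := by
    rcases le_total (f s) (f t) with hle | hle
    · rw [min_eq_left hle, max_eq_right hle]
      exact intermediate_value_univ s t hfc
    · rw [min_eq_right hle, max_eq_left hle]
      exact intermediate_value_univ t s hfc
  obtain ⟨u, hu⟩ := hIcc ⟨hq1.le, hq2.le⟩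
  obtain ⟨X, hX⟩ := QuotientGroup.mk_surjective (ρ u g)
  have hXt : ((X : Matrix (Fin 2) (Fin 2) ℝ).trace) ^ 2 = (2 * Real.cos (π * q)) ^ 2 := by
    rw [← trsq_mk X, hX]
    exact hu
  obtain ⟨m, hm1, hmc⟩ := pow_central_of_elliptic_rational X q hXt (by rw [hXt]; exact hq4)
  have hgm : g ^ m = 1 := by
    apply hinj u
    rw [map_pow, _root_.map_one, ← hX, ← QuotientGroup.mk_pow]
    exact (QuotientGroup.eq_one_iff _).mpr hmc
  have hrange : Set.range f ⊆
      (fun k : ℕ => (2 * Real.cos (π * k / m)) ^ 2) '' (Set.Iic m) := by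
    rintro _ ⟨w, rfl⟩
    obtain ⟨Y, hY⟩ := QuotientGroup.mk_surjective (ρ w g)
    have hYc : Y ^ m ∈ Subgroup.center SL2 := by
      apply (QuotientGroup.eq_one_iff _).mp
      rw [QuotientGroup.mk_pow, hY, ← map_pow, hgm, _root_.map_one]
    obtain ⟨k, hk, hkeq⟩ := trace_sq_of_pow_central Y m hm1 hYc
    refine ⟨k, hk, ?_⟩
    show (2 * Real.cos (π * k / m)) ^ 2 = f w
    rw [← hkeq, ← trsq_mk Y, hY]
  have hfin : ((fun k : ℕ => (2 * Real.cos (π * k / m)) ^ 2) '' (Set.Iic m)).Finite :=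
    (Set.finite_Iic m).image _
  exact Set.Icc_infinite hlohi (hfin.subset (hIcc.trans hrange))
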